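/- Let $M$ be a nonzero module over the Virasoro Lie algebra (with basis $\{L_n\}_{n \in \mathbb{Z}} \cup \{C\}$, brackets $[L_m, L_n] = (m-n)L_{m+n} + \delta_{m,-n}\frac{m^3-m}{12} C$, $C$ central), on which the central element $C$ acts as a scalar $c$. If there exists $N > 0$ such that $L_n$ acts as $0$ on $M$ for all $n$ with $|n| \ge N$, then $c = 0$. (In particular, a module over the Virasoro algebra with nonzero central charge cannot be 'bounded' in this sense.) -/

import Mathlib

/-- A module over the Virasoro algebra with central charge `c`, given by operators
`L n` satisfying the Virasoro commutation relations, which is "bounded"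
(`L n = 0` for `|n| ≥ N`) must have `c = 0`. -/
theorem stmt12 {M : Type*} [AddCommGroup M] [Module ℂ M] [Nontrivial M]
    (L : ℤ → (M →ₗ[ℂ] M)) (c : ℂ)
    (hrel : ∀ m n : ℤ, L m ∘ₗ L n - L n ∘ₗ L m
      = ((m : ℂ) - (n : ℂ)) • L (m + n)
        + (if m = -n then (((m : ℂ) ^ 3 - (m : ℂ)) / 12 * c) • (LinearMap.id : M →ₗ[ℂ] M)
           else 0))
    (hbdd : ∃ N : ℤ, 0 < N ∧ ∀ n : ℤ, N ≤ |n| → L n = 0) :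
    c = 0 := by
  obtain ⟨N, hN, hL⟩ := hbdd
  obtain ⟨x, hx⟩ := exists_ne (0 : M)
  -- key relation for any n ≥ N: 0 = 2n • L 0 x + ((n³-n)/12 * c) • x
  have key : ∀ n : ℤ, N ≤ n →
      (2 * (n : ℂ)) • (L 0) x + (((n : ℂ) ^ 3 - (n : ℂ)) / 12 * c) • x = 0 := by
    intro n hn
    have hLn : L n = 0 := hL n (by rw [abs_of_pos (lt_of_lt_of_le hN hn)]; exact hn)
    have hLn' : L (-n) = 0 := hL (-n) (by rw [abs_neg, abs_of_pos (lt_of_lt_of_le hN hn)]; exact hn)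
    have h := hrel n (-n)
    rw [hLn, hLn', if_pos (neg_neg n).symm, add_neg_cancel] at h
    have h' := congrArg (fun f : M →ₗ[ℂ] M => f x) h
    simp only [LinearMap.sub_apply, LinearMap.comp_apply, LinearMap.zero_apply,
      LinearMap.add_apply, LinearMap.smul_apply, LinearMap.id_apply, map_zero,
      sub_zero, zero_sub, neg_zero] at h'
    have : ((n : ℂ) - (-n : ℤ)) = 2 * (n : ℂ) := by push_cast; ring
    rw [← this]
    exact h'.symm
  have h1 := key N le_rfl
  have h2 := key (N + 1) (by omega)
  -- eliminate L 0 x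
  have hcomb : ((((N : ℂ) + 1) * (((N : ℂ) ^ 3 - N) / 12) -
      (N : ℂ) * ((((N : ℂ) + 1) ^ 3 - ((N : ℂ) + 1)) / 12)) * c) • x = 0 := by
    have e1 := congrArg (fun v => ((N : ℂ) + 1) • v) h1
    have e2 := congrArg (fun v => (N : ℂ) • v) h2
    simp only [smul_add, smul_smul, smul_zero] at e1 e2
    have e3 := congrArg₂ (· - ·) e1 e2
    simp only [sub_zero] at e3
    rw [← e3]
    push_cast
    module
  have hNc : (N : ℂ) ≠ 0 := by
    exact_mod_cast (by omega : N ≠ 0)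
  have hcoef : (((N : ℂ) + 1) * (((N : ℂ) ^ 3 - N) / 12) -
      (N : ℂ) * ((((N : ℂ) + 1) ^ 3 - ((N : ℂ) + 1)) / 12)) ≠ 0 := by
    have : (((N : ℂ) + 1) * (((N : ℂ) ^ 3 - N) / 12) -
        (N : ℂ) * ((((N : ℂ) + 1) ^ 3 - ((N : ℂ) + 1)) / 12))
        = -((N : ℂ) * ((N : ℂ) + 1) * (2 * (N : ℂ) + 1)) / 12 := by ring
    rw [this]
    have h1 : (N : ℂ) + 1 ≠ 0 := by
      intro h; apply hNc
      have : (N : ℂ) = ((-1 : ℤ) : ℂ) := by push_cast; linear_combination h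
      exact_mod_cast absurd (by exact_mod_cast this : N = -1) (by omega)
    have h2 : 2 * (N : ℂ) + 1 ≠ 0 := by
      intro h
      have : ((2 * N + 1 : ℤ) : ℂ) = 0 := by push_cast; linear_combination h
      exact absurd (by exact_mod_cast this : 2 * N + 1 = 0) (by omega)
    exact div_ne_zero (neg_ne_zero.mpr (mul_ne_zero (mul_ne_zero hNc h1) h2)) (by norm_num)
  by_contra hc
  exact hx (by simpa [smul_eq_zero, hcoef, hc] using hcomb)
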